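/- Let N ≥ 1 and let f_1 = 1/2, f_j = (1 - f_{j-1})/(2 - (1 + 1/f_N) f_{j-1}) for 1 < j ≤ N define Pareto-optimal fractions with 1/2 ≤ f_j < f_{j+1} < 1. Then the resulting diversity function satisfies d^p(r) = 1 - r + (1 - r/f_N)^+ for all r ∈ [0,1], where d^p(r) = min over j ∈ {1,...,N+1} with f_j ≥ r of [(1-r)/f_j + (1 - r/f_{j-1})^+] (with f_0 = 0 giving first term (1-r)/f_1, and f_{N+1} = 1). -/

import Mathlib

/-- Segment-j diversity exponent for DDF with waiting fractions `f`
(the j = 1 term omits the `(1 - r/f 0)^+` part). -/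
noncomputable def dTerm (f : ℕ → ℝ) (j : ℕ) (r : ℝ) : ℝ :=
  (1 - r) / f j + if j = 1 then 0 else max (1 - r / f (j - 1)) 0

/-- Diversity gain: minimum of the segment exponents over j with f j ≥ r. -/
noncomputable def dFun (N : ℕ) (f : ℕ → ℝ) (r : ℝ) : ℝ :=
  sInf {x | ∃ j, 1 ≤ j ∧ j ≤ N + 1 ∧ r ≤ f j ∧ x = dTerm f j r}

set_option maxHeartbeats 1000000

/-- The Pareto-optimal fractions achieve d^p(r) = 1 - r + (1 - r/f N)^+. -/
theorem stmt_6 (N : ℕ) (hN : 1 ≤ N) (f : ℕ → ℝ)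
    (hf0 : f 0 = 0) (hf1 : f 1 = 1 / 2) (hfend : f (N + 1) = 1)
    (hrec : ∀ j, 1 < j → j ≤ N →
      f j = (1 - f (j - 1)) / (2 - (1 + 1 / f N) * f (j - 1)))
    (hbnd : ∀ j, 1 ≤ j → j ≤ N → 1 / 2 ≤ f j ∧ f j < f (j + 1))
    (hlast : f N < 1) :
    ∀ r ∈ Set.Icc (0 : ℝ) 1,
      dFun N f r = 1 - r + max (1 - r / f N) 0 := by
  intro r hr
  obtain ⟨hr0, hr1⟩ := hr
  have hfNhalf : (1:ℝ)/2 ≤ f N := (hbnd N hN le_rfl).1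
  have hfNpos : (0:ℝ) < f N := by linarith
  have hfNne : f N ≠ 0 := ne_of_gt hfNpos
  -- monotonicity up to N
  have mono : ∀ k j, 1 ≤ j → j + k ≤ N → f j ≤ f (j + k) := by
    intro k
    induction k with
    | zero => intro j _ _; simp
    | succ k ih =>
      intro j hj1 hjk
      have h1 : j + k ≤ N := by omega
      have h2 := ih j hj1 h1
      have h3 : f (j + k) < f (j + k + 1) := (hbnd (j + k) (by omega) h1).2
      have : j + (k + 1) = (j + k) + 1 := by omega
      rw [this]
      linarith
  have monoN : ∀ j, 1 ≤ j → j ≤ N → f j ≤ f N := by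
    intro j hj1 hjN
    have := mono (N - j) j hj1 (by omega)
    rwa [show j + (N - j) = N by omega] at this
  set S := {x | ∃ j, 1 ≤ j ∧ j ≤ N + 1 ∧ r ≤ f j ∧ x = dTerm f j r} with hS
  have hmem : (1 - r + max (1 - r / f N) 0) ∈ S := by
    refine ⟨N + 1, by omega, le_rfl, by rw [hfend]; exact hr1, ?_⟩
    have hne : N + 1 ≠ 1 := by omega
    simp [dTerm, hne, hfend, show N ≠ 0 by omega]
  -- lower bound
  have hlb : ∀ x ∈ S, 1 - r + max (1 - r / f N) 0 ≤ x := by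
    rintro x ⟨j, hj1, hjN1, hrfj, rfl⟩
    rcases eq_or_lt_of_le hjN1 with hje | hjlt
    · -- j = N+1 : equality
      subst hje
      have hne : N + 1 ≠ 1 := by omega
      simp [dTerm, hne, hfend, show N ≠ 0 by omega]
    · -- j ≤ N
      have hjN : j ≤ N := by omega
      have hfjN : f j ≤ f N := monoN j hj1 hjN
      have hrfN : r ≤ f N := le_trans hrfj hfjN
      have hmaxN : max (1 - r / f N) 0 = 1 - r / f N := by
        apply max_eq_left
        have : r / f N ≤ 1 := (div_le_one hfNpos).mpr hrfN
        linarith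
      rw [hmaxN]
      have e2 : r / f N * f N = r := div_mul_cancel₀ r hfNne
      rcases eq_or_lt_of_le hj1 with hje1 | hj2
      · -- j = 1
        subst hje1
        have hterm : dTerm f 1 r = 2 * (1 - r) := by
          simp [dTerm, hf1]
          ring
        rw [hterm]
        have h1 : r ≤ r / f N := by
          rw [le_div_iff₀ hfNpos]
          nlinarith
        linarith
      · -- 2 ≤ j ≤ N
        have hne1 : j ≠ 1 := by omega
        have hp1 : 1 ≤ j - 1 := by omega
        have hpN : j - 1 ≤ N := by omega
        set fp := f (j - 1) with hfp
        set fj := f j with hfj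
        have hfphalf : (1:ℝ)/2 ≤ fp := (hbnd (j-1) hp1 hpN).1
        have hfppos : (0:ℝ) < fp := by linarith
        have hfpne : fp ≠ 0 := ne_of_gt hfppos
        have hfjhalf : (1:ℝ)/2 ≤ fj := (hbnd j hj1 hjN).1
        have hfjpos : (0:ℝ) < fj := by linarith
        have hfjne : fj ≠ 0 := ne_of_gt hfjpos
        have hpltj : fp < fj := by
          have := (hbnd (j-1) hp1 hpN).2
          rwa [show j - 1 + 1 = j by omega] at this
        have hfpN : fp ≤ f N := monoN (j-1) hp1 hpN
        have hfjle1 : fj < 1 := lt_of_le_of_lt hfjN hlast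
        -- the recursion identity
        have hrecj := hrec j (by omega) hjN
        have hDne : (2 - (1 + 1 / f N) * fp) ≠ 0 := by
          intro hD
          rw [hD, div_zero] at hrecj
          rw [← hfj] at hrecj
          linarith
        have hid : fj * (2 - (1 + 1 / f N) * fp) = 1 - fp := by
          rw [hfj, hrecj, div_mul_cancel₀ _ hDne]
        have e1 : f N * (1 + 1 / f N) = f N + 1 := by
          field_simp
        have hD2eq : f N * (2 - (1 + 1 / f N) * fp) = 2 * f N - fp * f N - fp := by
          linear_combination (-fp) * e1
        have hid2 : fj * (2 * f N - fp * f N - fp) = (1 - fp) * f N := by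
          rw [← hD2eq]
          linear_combination f N * hid
        have h0 : fj * (2 * f N - fp * f N - fp) - (1 - fp) * f N = 0 := by
          rw [hid2]; ring
        have e3 : r / fp * fp = r := div_mul_cancel₀ r hfpne
        have e4 : (1 - r) / fj * fj = 1 - r := div_mul_cancel₀ _ hfjne
        have hterm : dTerm f j r = (1 - r) / fj + max (1 - r / fp) 0 := by
          simp [dTerm, hne1, ← hfp, ← hfj]
        rw [hterm]
        rcases le_or_gt r fp with hrp | hrp
        · -- r ≤ fp
          have hmaxp : max (1 - r / fp) 0 = 1 - r / fp := by
            apply max_eq_left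
            have : r / fp ≤ 1 := (div_le_one hfppos).mpr hrp
            linarith
          rw [hmaxp]
          have hkey : ((1 - r) * fp * f N + fj * fp * f N - r * fj * f N) -
              (2 * fj * fp * f N - r * fj * fp * f N - r * fj * fp)
              = (1 - fj) * (fp - r) * f N
                - r * (fj * (2 * f N - fp * f N - fp) - (1 - fp) * f N) := by ring
          have hT : (0:ℝ) ≤ (1 - fj) * (fp - r) * f N :=
            mul_nonneg (mul_nonneg (by linarith) (by linarith)) hfNpos.le
          have hr0' : r * (fj * (2 * f N - fp * f N - fp) - (1 - fp) * f N) = 0 := by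
            rw [h0, mul_zero]
          have hpoly : 2 * fj * fp * f N - r * fj * fp * f N - r * fj * fp ≤
              (1 - r) * fp * f N + fj * fp * f N - r * fj * f N := by
            linarith [hkey, hT, hr0']
          have hpos : (0:ℝ) < fj * fp * f N := by positivity
          have eL : (1 - r + (1 - r / f N)) * (fj * fp * f N)
              = 2 * fj * fp * f N - r * fj * fp * f N - r * fj * fp := by
            linear_combination (-(fj * fp)) * e2
          have eR : ((1 - r) / fj + (1 - r / fp)) * (fj * fp * f N)
              = (1 - r) * fp * f N + fj * fp * f N - r * fj * f N := by
            linear_combination (fp * f N) * e4 + (-(fj * f N)) * e3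
          have hmul : (1 - r + (1 - r / f N)) * (fj * fp * f N) ≤
              ((1 - r) / fj + (1 - r / fp)) * (fj * fp * f N) := by
            rw [eL, eR]; exact hpoly
          exact le_of_mul_le_mul_right hmul hpos
        · -- fp < r
          have hmaxp : (0:ℝ) ≤ max (1 - r / fp) 0 := le_max_right _ _
          have hkey2 : (1 - r) * f N - (2 * fj * f N - r * fj * f N - r * fj)
              = (r - fp) * (fj * f N + fj - f N)
                - (fj * (2 * f N - fp * f N - fp) - (1 - fp) * f N) := by ring
          have hT2 : (0:ℝ) ≤ (r - fp) * (fj * f N + fj - f N) :=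
            mul_nonneg (by linarith) (by nlinarith)
          have hpoly : 2 * fj * f N - r * fj * f N - r * fj ≤ (1 - r) * f N := by
            linarith [hkey2, hT2, h0]
          have hpos : (0:ℝ) < fj * f N := by positivity
          have eL : (1 - r + (1 - r / f N)) * (fj * f N)
              = 2 * fj * f N - r * fj * f N - r * fj := by
            linear_combination (-fj) * e2
          have eR : (1 - r) / fj * (fj * f N) = (1 - r) * f N := by
            linear_combination (f N) * e4
          have hmul : (1 - r + (1 - r / f N)) * (fj * f N) ≤ (1 - r) / fj * (fj * f N) := by
            rw [eL, eR]; exact hpoly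
          have := le_of_mul_le_mul_right hmul hpos
          linarith
  -- conclude
  have hbdd : BddBelow S := ⟨_, hlb⟩
  exact le_antisymm (csInf_le hbdd hmem) (le_csInf ⟨_, hmem⟩ hlb)
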